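/- arXiv:1508.01762 — 2 statements merged into one kernel-verified Lean document; each statement's English description precedes it below -/
import Mathlib

section
/- Let χ be a kernel satisfying (χ1), (χ2), and (χ3) with some 0 < β < 1. Then for every uniformly continuous and bounded f: ℝ → ℝ, every x ∈ ℝ, and all sufficiently large w > 0: |(S_w f)(x) - f(x)| ≤ ω(f, w^{-β})·[m_β(χ) + 2m₀(χ)] + 2^{β+1}·‖f‖_∞·m_β(χ)·w^{-β}, where ω(f, δ) is the modulus of continuity of f. -/
open MeasureTheory Filter Set Real

noncomputable def moment (χ : ℝ → ℝ) (β : ℝ) : ENNReal :=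
  ⨆ u : ℝ, ∑' k : ℤ, ENNReal.ofReal (|χ (u - k)| * |u - k| ^ β)

def Chi1 (χ : ℝ → ℝ) : Prop :=
  Integrable χ ∧ ∃ B : ℝ, ∀ x ∈ Set.Icc (-1 : ℝ) 1, |χ x| ≤ B

def Chi2 (χ : ℝ → ℝ) : Prop := ∀ u : ℝ, HasSum (fun k : ℤ => χ (u - k)) 1

def Chi3 (χ : ℝ → ℝ) : Prop := ∃ β : ℝ, 0 < β ∧ moment χ β < ⊤

noncomputable def SK (χ : ℝ → ℝ) (w : ℝ) (f : ℝ → ℝ) (t : ℝ) : ℝ :=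
  ∑' k : ℤ, χ (w * t - k) * (w * ∫ u in ((k : ℝ) / w)..(((k : ℝ) + 1) / w), f u)

noncomputable def PsiM (χ : ℝ → ℝ) (x : ℝ) : ℝ :=
  ∑' k : ℤ, if x < (k : ℝ) then χ (x - k) else 0

noncomputable def PsiP (χ : ℝ → ℝ) (x : ℝ) : ℝ :=
  ∑' k : ℤ, if (k : ℝ) < x then χ (x - k) else 0

noncomputable def gjump (f : ℝ → ℝ) (t fp fm : ℝ) (x : ℝ) : ℝ :=
  if x < t then f x - fm else if x = t then 0 else f x - fp

noncomputable def modCont (f : ℝ → ℝ) (δ : ℝ) : ℝ :=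
  sSup {d : ℝ | ∃ x y : ℝ, |x - y| ≤ δ ∧ d = |f x - f y|}

noncomputable def ftrans (χ : ℝ → ℝ) (v : ℝ) : ℂ :=
  ∫ u : ℝ, (χ u : ℂ) * Complex.exp (-(Complex.I * u * v))

section MC
variable {f : ℝ → ℝ} {B δ : ℝ} (hB : ∀ x, |f x| ≤ B)
include hB

lemma mc_bdd : BddAbove {d : ℝ | ∃ x y : ℝ, |x - y| ≤ δ ∧ d = |f x - f y|} := by
  refine ⟨B + B, ?_⟩
  rintro d ⟨x, y, -, rfl⟩
  exact (abs_sub _ _).trans (add_le_add (hB x) (hB y))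

lemma le_mc {x y : ℝ} (h : |x - y| ≤ δ) : |f x - f y| ≤ modCont f δ :=
  le_csSup (mc_bdd hB) ⟨x, y, h, rfl⟩

lemma mc_nonneg (hδ : 0 ≤ δ) : 0 ≤ modCont f δ := by
  have := le_mc hB (x := 0) (y := 0) (by simpa using hδ)
  simpa using this

lemma mc_mono (hδ : 0 ≤ δ) {δ' : ℝ} (h : δ ≤ δ') : modCont f δ ≤ modCont f δ' := by
  refine csSup_le ⟨|f 0 - f 0|, 0, 0, by simpa using hδ, rfl⟩ ?_
  rintro d ⟨x, y, hxy, rfl⟩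
  exact le_mc hB (hxy.trans h)

lemma mc_subadd {a b : ℝ} (ha : 0 ≤ a) (hb : 0 ≤ b) :
    modCont f (a + b) ≤ modCont f a + modCont f b := by
  refine csSup_le ⟨|f 0 - f 0|, 0, 0, by simpa using add_nonneg ha hb, rfl⟩ ?_
  rintro d ⟨x, y, hxy, rfl⟩
  by_cases h : |x - y| ≤ a
  · exact (le_mc hB h).trans (le_add_of_nonneg_right (mc_nonneg hB hb))
  · push_neg at h
    have ht : 0 < |x - y| := ha.trans_lt h
    set t := |x - y| with htdef
    set z := x + a * (y - x) / t with hz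
    have hxz : |x - z| ≤ a := by
      have : x - z = -(a * (y - x) / t) := by rw [hz]; ring
      rw [this, abs_neg, abs_div, abs_mul, abs_of_nonneg ha, abs_sub_comm y x, ← htdef,
        abs_of_pos ht, mul_div_assoc, div_self ht.ne', mul_one]
    have hzy : |z - y| ≤ b := by
      have hzy' : z - y = (x - y) * (1 - a / t) := by
        rw [hz]; field_simp; ring
      rw [hzy', abs_mul]
      have h1 : 0 ≤ 1 - a / t := by
        rw [sub_nonneg, div_le_one ht]; exact h.le
      rw [abs_of_nonneg h1, ← htdef]
      have : t * (1 - a / t) = t - a := by field_simp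
      rw [this]
      linarith [hxy]
    calc |f x - f y| ≤ |f x - f z| + |f z - f y| := abs_sub_le _ _ _
      _ ≤ modCont f a + modCont f b := add_le_add (le_mc hB hxz) (le_mc hB hzy)

lemma mc_nsmul (hδ : 0 ≤ δ) : ∀ n : ℕ, modCont f (n * δ) ≤ n * modCont f δ := by
  intro n
  induction n with
  | zero =>
      simp only [Nat.cast_zero, zero_mul]
      refine csSup_le ⟨|f 0 - f 0|, 0, 0, by simp, rfl⟩ ?_
      rintro d ⟨x, y, hxy, rfl⟩
      have hxy' : x = y := by
        have := abs_nonneg (x - y)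
        have : x - y = 0 := by rw [← abs_eq_zero]; linarith
        linarith [sub_eq_zero.mp this]
      simp [hxy']
  | succ n ih =>
      have : ((n + 1 : ℕ) : ℝ) * δ = (n : ℝ) * δ + δ := by push_cast; ring
      rw [this]
      calc modCont f ((n : ℝ) * δ + δ) ≤ modCont f ((n : ℝ) * δ) + modCont f δ :=
            mc_subadd hB (by positivity) hδ
        _ ≤ (n : ℝ) * modCont f δ + modCont f δ := by linarith
        _ = ((n + 1 : ℕ) : ℝ) * modCont f δ := by push_cast; ring

lemma mc_scale {lam : ℝ} (hlam : 0 ≤ lam) (hδ : 0 ≤ δ) :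
    modCont f (lam * δ) ≤ (1 + lam) * modCont f δ := by
  have h1 : lam * δ ≤ ((⌊lam⌋₊ + 1 : ℕ) : ℝ) * δ := by
    apply mul_le_mul_of_nonneg_right _ hδ
    push_cast
    exact (Nat.lt_floor_add_one lam).le
  calc modCont f (lam * δ) ≤ modCont f (((⌊lam⌋₊ + 1 : ℕ) : ℝ) * δ) :=
        mc_mono hB (by positivity) h1
    _ ≤ ((⌊lam⌋₊ + 1 : ℕ) : ℝ) * modCont f δ := mc_nsmul hB hδ _
    _ ≤ (1 + lam) * modCont f δ := by
        apply mul_le_mul_of_nonneg_right _ (mc_nonneg hB hδ)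
        push_cast
        have := Nat.floor_le hlam
        linarith

end MC


section Mom
variable {χ : ℝ → ℝ} {β : ℝ}

lemma mom_nonneg (u : ℝ) (k : ℤ) : 0 ≤ |χ (u - k)| * |u - k| ^ β :=
  mul_nonneg (abs_nonneg _) (Real.rpow_nonneg (abs_nonneg _) _)

lemma mom_summable (hm : moment χ β ≠ ⊤) (u : ℝ) :
    Summable (fun k : ℤ => |χ (u - k)| * |u - k| ^ β) := by
  have hle : ∑' k : ℤ, ENNReal.ofReal (|χ (u - k)| * |u - k| ^ β) ≤ moment χ β :=
    le_iSup (fun u => ∑' k : ℤ, ENNReal.ofReal (|χ (u - k)| * |u - k| ^ β)) u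
  have hne : (∑' k : ℤ, ENNReal.ofReal (|χ (u - k)| * |u - k| ^ β)) ≠ ⊤ :=
    fun h => hm (top_le_iff.mp (h ▸ hle))
  have := ENNReal.summable_toReal hne
  exact this.congr fun k => ENNReal.toReal_ofReal (mom_nonneg (χ := χ) (β := β) u _)

lemma mom_tsum_le (hm : moment χ β ≠ ⊤) (u : ℝ) :
    ∑' k : ℤ, |χ (u - k)| * |u - k| ^ β ≤ (moment χ β).toReal := by
  have hle : ∑' k : ℤ, ENNReal.ofReal (|χ (u - k)| * |u - k| ^ β) ≤ moment χ β :=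
    le_iSup (fun u => ∑' k : ℤ, ENNReal.ofReal (|χ (u - k)| * |u - k| ^ β)) u
  have hne : (∑' k : ℤ, ENNReal.ofReal (|χ (u - k)| * |u - k| ^ β)) ≠ ⊤ :=
    fun h => hm (top_le_iff.mp (h ▸ hle))
  have h1 : (∑' k : ℤ, ENNReal.ofReal (|χ (u - k)| * |u - k| ^ β)).toReal
      = ∑' k : ℤ, |χ (u - k)| * |u - k| ^ β := by
    rw [ENNReal.tsum_toReal_eq (fun k => ENNReal.ofReal_ne_top)]
    exact tsum_congr fun k => ENNReal.toReal_ofReal (mom_nonneg u k)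
  rw [← h1]
  exact ENNReal.toReal_mono hm hle

lemma mom_zero_ne_top (hβ : 0 ≤ β) (hm : moment χ β ≠ ⊤)
    (hb : ∃ B : ℝ, ∀ x ∈ Set.Icc (-1 : ℝ) 1, |χ x| ≤ B) : moment χ 0 ≠ ⊤ := by
  obtain ⟨B, hB⟩ := hb
  set B' := max B 0 with hB'def
  have hB'0 : (0:ℝ) ≤ B' := le_max_right _ _
  have key : moment χ 0 ≤ moment χ β + ENNReal.ofReal (2 * B') := by
    refine iSup_le fun u => ?_
    have hpt : ∀ k : ℤ, ENNReal.ofReal (|χ (u - k)| * |u - k| ^ (0:ℝ))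
        ≤ ENNReal.ofReal (|χ (u - k)| * |u - k| ^ β)
          + (if |u - (k:ℝ)| < 1 then ENNReal.ofReal B' else 0) := by
      intro k
      by_cases h : |u - (k:ℝ)| < 1
      · simp only [h, if_true]
        refine le_add_of_nonneg_of_le (by positivity) ?_
        apply ENNReal.ofReal_le_ofReal
        rw [Real.rpow_zero, mul_one]
        refine (hB _ ?_).trans (le_max_left _ _)
        exact abs_le.mp h.le
      · simp only [h, if_false, add_zero]
        apply ENNReal.ofReal_le_ofReal
        rw [Real.rpow_zero, mul_one]
        push_neg at h
        have h1 : (1:ℝ) ≤ |u - k| ^ β := Real.one_le_rpow h hβ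
        nlinarith [abs_nonneg (χ (u - (k:ℝ)))]
    calc ∑' k : ℤ, ENNReal.ofReal (|χ (u - k)| * |u - k| ^ (0:ℝ))
        ≤ ∑' k : ℤ, (ENNReal.ofReal (|χ (u - k)| * |u - k| ^ β)
            + (if |u - (k:ℝ)| < 1 then ENNReal.ofReal B' else 0)) := ENNReal.tsum_le_tsum hpt
      _ = (∑' k : ℤ, ENNReal.ofReal (|χ (u - k)| * |u - k| ^ β))
            + ∑' k : ℤ, (if |u - (k:ℝ)| < 1 then ENNReal.ofReal B' else 0) := ENNReal.tsum_add
      _ ≤ moment χ β + ENNReal.ofReal (2 * B') := by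
          refine add_le_add (le_iSup (fun u => ∑' k : ℤ,
            ENNReal.ofReal (|χ (u - k)| * |u - k| ^ β)) u) ?_
          have hsupp : ∀ k : ℤ, k ∉ ({⌊u⌋, ⌊u⌋ + 1} : Finset ℤ) →
              (if |u - (k:ℝ)| < 1 then ENNReal.ofReal B' else 0) = 0 := by
            intro k hk
            simp only [Finset.mem_insert, Finset.mem_singleton] at hk
            rw [if_neg]
            intro habs
            rw [abs_lt] at habs
            have h1 : ⌊u⌋ ≤ k := by
              have : u < (k:ℝ) + 1 := by linarith [habs.2]
              have := Int.floor_lt.mpr (by push_cast; linarith : u < ((k + 1 : ℤ) : ℝ))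
              omega
            have h2 : k ≤ ⌊u⌋ + 1 := by
              have : (k:ℝ) ≤ u + 1 := by linarith [habs.1]
              have : (k:ℝ) - 1 ≤ u := by linarith
              have := Int.le_floor.mpr (by push_cast; linarith : ((k - 1 : ℤ) : ℝ) ≤ u)
              omega
            omega
          rw [tsum_eq_sum hsupp]
          have hne : (⌊u⌋ : ℤ) ∉ ({⌊u⌋ + 1} : Finset ℤ) := by simp
          rw [Finset.sum_insert hne, Finset.sum_singleton]
          have : ENNReal.ofReal (2 * B') = ENNReal.ofReal B' + ENNReal.ofReal B' := by
            rw [← ENNReal.ofReal_add hB'0 hB'0]; ring_nf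
          rw [this]
          gcongr <;> split <;> simp
  exact fun h => by
    rw [h] at key
    exact (ENNReal.add_lt_top.mpr ⟨hm.lt_top, ENNReal.ofReal_lt_top⟩).ne (top_le_iff.mp key)

end Mom


lemma rpow_one_add_le {d β : ℝ} (hd : 0 ≤ d) (hβ0 : 0 ≤ β) (hβ1 : β ≤ 1) :
    (1 + d) ^ β ≤ 1 + d ^ β := by
  have h := NNReal.rpow_add_le_add_rpow (1 : NNReal) d.toNNReal hβ0 hβ1
  have h' := NNReal.coe_le_coe.2 h
  push_cast at h'
  rw [Real.coe_toNNReal d hd] at h'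
  simpa using h'

section Main
variable {χ f : ℝ → ℝ} {β w x : ℝ}

set_option maxHeartbeats 1000000 in
theorem main (h2 : ∀ u : ℝ, HasSum (fun k : ℤ => χ (u - k)) 1)
    (hβ0 : 0 < β) (hβ1 : β < 1) (hmom : moment χ β ≠ ⊤) (hm0 : moment χ 0 ≠ ⊤)
    (hcont : Continuous f) (hfb : ∃ B : ℝ, ∀ x, |f x| ≤ B)
    (hw : 2 ≤ w) :
      |SK χ w f x - f x| ≤
        modCont f (w ^ (-β)) * ((moment χ β).toReal + 2 * (moment χ 0).toReal)
          + 2 ^ (β + 1) * (⨆ y, |f y|) * (moment χ β).toReal * w ^ (-β) := by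
  obtain ⟨Bf, hBf⟩ := hfb
  have hw0 : (0:ℝ) < w := by linarith
  set F := ⨆ y, |f y| with hF
  have hFb : ∀ y, |f y| ≤ F := fun y =>
    le_ciSup ⟨Bf, by rintro r ⟨y, rfl⟩; exact hBf y⟩ y
  have hF0 : 0 ≤ F := (abs_nonneg (f 0)).trans (hFb 0)
  set δ := w ^ (-β) with hδdef
  have hδ0 : 0 < δ := Real.rpow_pos_of_pos hw0 _
  have hω0 : 0 ≤ modCont f δ := mc_nonneg hBf hδ0.le
  have hdd0 : ∀ k : ℤ, (0:ℝ) ≤ |w * x - k| ^ β := fun k => Real.rpow_nonneg (abs_nonneg _) _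
  have hSβ : Summable (fun k : ℤ => |χ (w * x - k)| * |w * x - k| ^ β) :=
    mom_summable hmom (w * x)
  have hSβle : ∑' k : ℤ, |χ (w * x - k)| * |w * x - k| ^ β ≤ (moment χ β).toReal :=
    mom_tsum_le hmom (w * x)
  have hS0 : Summable (fun k : ℤ => |χ (w * x - k)|) := by
    have := mom_summable hm0 (w * x)
    simpa [Real.rpow_zero] using this
  have hS0le : ∑' k : ℤ, |χ (w * x - k)| ≤ (moment χ 0).toReal := by
    have := mom_tsum_le hm0 (w * x)
    simpa [Real.rpow_zero] using this
  set C : ℤ → ℝ := fun k =>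
    modCont f δ * (2 + |w * x - k| ^ β) + 2 * F * ((2 / w) ^ β * |w * x - k| ^ β) with hCdef
  have hC0 : ∀ k, 0 ≤ C k := by
    intro k
    have h1 : (0:ℝ) ≤ modCont f δ * (2 + |w * x - k| ^ β) :=
      mul_nonneg hω0 (by linarith [hdd0 k])
    have h2 : (0:ℝ) ≤ 2 * F * ((2 / w) ^ β * |w * x - k| ^ β) := by positivity
    simp only [hCdef]; linarith
  have hklt : ∀ k : ℤ, ((k:ℝ)/w) ≤ (((k:ℝ)+1)/w) := by
    intro k
    gcongr <;> linarith
  have huIoc : ∀ k : ℤ, ∀ u ∈ Set.uIoc ((k:ℝ)/w) (((k:ℝ)+1)/w), |f u - f x| ≤ C k := by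
    intro k u hu
    rw [Set.uIoc_of_le (hklt k)] at hu
    obtain ⟨hu1, hu2⟩ := hu
    have hwu1 : (k:ℝ) < w * u := by
      rw [div_lt_iff₀ hw0] at hu1; linarith
    have hwu2 : w * u ≤ (k:ℝ) + 1 := by
      rw [le_div_iff₀ hw0] at hu2; linarith
    have hwt : w * |u - x| ≤ 1 + |w * x - k| := by
      have he : w * (u - x) = (w * u - k) - (w * x - k) := by ring
      calc w * |u - x| = |w * (u - x)| := by rw [abs_mul, abs_of_pos hw0]
        _ = |(w * u - k) - (w * x - k)| := by rw [he]
        _ ≤ |w * u - k| + |w * x - k| := abs_sub _ _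
        _ ≤ 1 + |w * x - k| := by
            have : |w * u - k| ≤ 1 := abs_le.mpr ⟨by linarith, by linarith⟩
            linarith
    by_cases hcase : |w * x - k| ≤ w / 2
    · have ht1 : |u - x| ≤ 1 := by
        have h1 : w * |u - x| ≤ w * 1 := by linarith
        exact le_of_mul_le_mul_left h1 hw0
      have ht0 : 0 ≤ |u - x| := abs_nonneg _
      have httβ : |u - x| ≤ |u - x| ^ β := by
        rcases eq_or_lt_of_le ht0 with h0 | h0
        · rw [← h0, Real.zero_rpow hβ0.ne']
        · calc |u - x| = |u - x| ^ (1:ℝ) := (Real.rpow_one _).symm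
            _ ≤ |u - x| ^ β := Real.rpow_le_rpow_of_exponent_ge h0 ht1 hβ1.le
      have htβ : |u - x| ^ β ≤ (1 + |w * x - k| ^ β) * δ := by
        have ht' : |u - x| ≤ (1 + |w * x - k|) / w := by
          rw [le_div_iff₀ hw0]; linarith
        calc |u - x| ^ β ≤ ((1 + |w * x - k|) / w) ^ β :=
              Real.rpow_le_rpow ht0 ht' hβ0.le
          _ = (1 + |w * x - k|) ^ β * w ^ (-β) := by
              rw [Real.div_rpow (by positivity) hw0.le, Real.rpow_neg hw0.le, div_eq_mul_inv]
          _ ≤ (1 + |w * x - k| ^ β) * δ := by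
              rw [hδdef]
              exact mul_le_mul_of_nonneg_right
                (rpow_one_add_le (abs_nonneg _) hβ0.le hβ1.le)
                (Real.rpow_pos_of_pos hw0 _).le
      have hmain : |f u - f x| ≤ (1 + (1 + |w * x - k| ^ β)) * modCont f δ := by
        calc |f u - f x| ≤ modCont f |u - x| := le_mc hBf le_rfl
          _ ≤ modCont f (|u - x| ^ β) := mc_mono hBf ht0 httβ
          _ ≤ modCont f ((1 + |w * x - k| ^ β) * δ) := by
              apply mc_mono hBf (Real.rpow_nonneg ht0 _) htβ
          _ ≤ (1 + (1 + |w * x - k| ^ β)) * modCont f δ :=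
              mc_scale hBf (by linarith [hdd0 k]) hδ0.le
      have h2' : (0:ℝ) ≤ 2 * F * ((2 / w) ^ β * |w * x - k| ^ β) := by positivity
      simp only [hCdef]
      nlinarith [hmain]
    · push_neg at hcase
      have h2F : |f u - f x| ≤ 2 * F := by
        calc |f u - f x| ≤ |f u| + |f x| := abs_sub _ _
          _ ≤ 2 * F := by linarith [hFb u, hFb x]
      have hone : (1:ℝ) ≤ (2 / w) ^ β * |w * x - k| ^ β := by
        rw [← Real.mul_rpow (by positivity) (abs_nonneg _)]
        apply Real.one_le_rpow _ hβ0.le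
        calc (1:ℝ) = (2 / w) * (w / 2) := by field_simp
          _ ≤ (2 / w) * |w * x - k| :=
              mul_le_mul_of_nonneg_left hcase.le (by positivity)
      have h1' : (0:ℝ) ≤ modCont f δ * (2 + |w * x - k| ^ β) :=
        mul_nonneg hω0 (by linarith [hdd0 k])
      simp only [hCdef]
      nlinarith [h2F, hone, hF0]
  have hlen : ∀ k : ℤ, |(((k:ℝ)+1)/w) - ((k:ℝ)/w)| = 1 / w := by
    intro k
    have : (((k:ℝ)+1)/w) - ((k:ℝ)/w) = 1 / w := by field_simp; ring
    rw [this, abs_of_pos (by positivity)]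
  have hIfx : ∀ k : ℤ,
      |(w * ∫ u in ((k:ℝ)/w)..(((k:ℝ)+1)/w), f u) - f x| ≤ C k := by
    intro k
    have hint : IntervalIntegrable f volume ((k:ℝ)/w) (((k:ℝ)+1)/w) :=
      hcont.intervalIntegrable _ _
    have hconst : ∫ _u in ((k:ℝ)/w)..(((k:ℝ)+1)/w), f x = (1/w) * f x := by
      rw [intervalIntegral.integral_const, smul_eq_mul]
      congr 1
      field_simp; ring
    have heq : (w * ∫ u in ((k:ℝ)/w)..(((k:ℝ)+1)/w), f u) - f x
        = w * ∫ u in ((k:ℝ)/w)..(((k:ℝ)+1)/w), (f u - f x) := by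
      rw [intervalIntegral.integral_sub hint (intervalIntegrable_const), hconst]
      field_simp
    rw [heq, abs_mul, abs_of_pos hw0]
    have hni := intervalIntegral.norm_integral_le_of_norm_le_const
      (C := C k) (f := fun u => f u - f x) (a := ((k:ℝ)/w)) (b := (((k:ℝ)+1)/w))
      (fun u hu => by rw [Real.norm_eq_abs]; exact huIoc k u hu)
    rw [Real.norm_eq_abs, hlen k] at hni
    calc w * |∫ u in ((k:ℝ)/w)..(((k:ℝ)+1)/w), (f u - f x)| ≤ w * (C k * (1/w)) := by
          exact mul_le_mul_of_nonneg_left hni hw0.le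
      _ = C k := by field_simp
  have haC : (fun k : ℤ => |χ (w * x - k)| * C k)
      = fun k : ℤ => (modCont f δ * (2 * |χ (w * x - k)|)
          + modCont f δ * (|χ (w * x - k)| * |w * x - k| ^ β))
          + (2 * F * (2 / w) ^ β) * (|χ (w * x - k)| * |w * x - k| ^ β) := by
    funext k
    simp only [hCdef]
    ring
  have hSC : Summable (fun k : ℤ => |χ (w * x - k)| * C k) := by
    rw [haC]
    exact (((hS0.mul_left 2).mul_left (modCont f δ)).add (hSβ.mul_left (modCont f δ))).add
      (hSβ.mul_left (2 * F * (2 / w) ^ β))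
  have hIb : ∀ k : ℤ, |w * ∫ u in ((k:ℝ)/w)..(((k:ℝ)+1)/w), f u| ≤ F := by
    intro k
    have hni := intervalIntegral.norm_integral_le_of_norm_le_const
      (C := F) (f := f) (a := ((k:ℝ)/w)) (b := (((k:ℝ)+1)/w))
      (fun u _ => by rw [Real.norm_eq_abs]; exact hFb u)
    rw [Real.norm_eq_abs, hlen k] at hni
    rw [abs_mul, abs_of_pos hw0]
    calc w * |∫ u in ((k:ℝ)/w)..(((k:ℝ)+1)/w), f u| ≤ w * (F * (1/w)) :=
          mul_le_mul_of_nonneg_left hni hw0.le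
      _ = F := by field_simp
  have hgsum : Summable (fun k : ℤ =>
      χ (w * x - k) * (w * ∫ u in ((k:ℝ)/w)..(((k:ℝ)+1)/w), f u)) := by
    apply Summable.of_norm
    apply Summable.of_nonneg_of_le (fun k => norm_nonneg _) _ (hS0.mul_right F)
    intro k
    rw [norm_mul, Real.norm_eq_abs, Real.norm_eq_abs]
    exact mul_le_mul_of_nonneg_left (hIb k) (abs_nonneg _)
  have hfxsum : HasSum (fun k : ℤ => χ (w * x - k) * f x) (f x) := by
    simpa using (h2 (w * x)).mul_right (f x)
  have hdiff : SK χ w f x - f x = ∑' k : ℤ,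
      χ (w * x - k) * ((w * ∫ u in ((k:ℝ)/w)..(((k:ℝ)+1)/w), f u) - f x) := by
    have hSK : SK χ w f x = ∑' k : ℤ,
        χ (w * x - k) * (w * ∫ u in ((k:ℝ)/w)..(((k:ℝ)+1)/w), f u) := rfl
    calc SK χ w f x - f x
        = (∑' k : ℤ, χ (w * x - k) * (w * ∫ u in ((k:ℝ)/w)..(((k:ℝ)+1)/w), f u))
            - ∑' k : ℤ, χ (w * x - k) * f x := by rw [hSK, hfxsum.tsum_eq]
      _ = ∑' k : ℤ, (χ (w * x - k) * (w * ∫ u in ((k:ℝ)/w)..(((k:ℝ)+1)/w), f u)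
            - χ (w * x - k) * f x) := (Summable.tsum_sub hgsum hfxsum.summable).symm
      _ = ∑' k : ℤ, χ (w * x - k) * ((w * ∫ u in ((k:ℝ)/w)..(((k:ℝ)+1)/w), f u) - f x) :=
            tsum_congr fun k => by ring
  rw [hdiff]
  have habsle : ∀ k : ℤ,
      |χ (w * x - k) * ((w * ∫ u in ((k:ℝ)/w)..(((k:ℝ)+1)/w), f u) - f x)|
        ≤ |χ (w * x - k)| * C k := by
    intro k
    rw [abs_mul]
    exact mul_le_mul_of_nonneg_left (hIfx k) (abs_nonneg _)
  have hgabs : Summable (fun k : ℤ =>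
      |χ (w * x - k) * ((w * ∫ u in ((k:ℝ)/w)..(((k:ℝ)+1)/w), f u) - f x)|) :=
    Summable.of_nonneg_of_le (fun k => abs_nonneg _) habsle hSC
  have key2 : (2:ℝ) ^ (β + 1) * w ^ (-β) = 2 * (2 / w) ^ β := by
    rw [Real.rpow_add two_pos, Real.rpow_one, Real.div_rpow (by norm_num) hw0.le,
      Real.rpow_neg hw0.le, div_eq_mul_inv]
    ring
  calc |∑' k : ℤ, χ (w * x - k) * ((w * ∫ u in ((k:ℝ)/w)..(((k:ℝ)+1)/w), f u) - f x)|
      ≤ ∑' k : ℤ, |χ (w * x - k) * ((w * ∫ u in ((k:ℝ)/w)..(((k:ℝ)+1)/w), f u) - f x)| := by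
        have hn := norm_tsum_le_tsum_norm (f := fun k : ℤ =>
            χ (w * x - k) * ((w * ∫ u in ((k:ℝ)/w)..(((k:ℝ)+1)/w), f u) - f x))
          (by simpa only [Real.norm_eq_abs] using hgabs)
        simpa only [Real.norm_eq_abs] using hn
    _ ≤ ∑' k : ℤ, |χ (w * x - k)| * C k := Summable.tsum_le_tsum habsle hgabs hSC
    _ = modCont f δ * (2 * ∑' k : ℤ, |χ (w * x - k)|)
          + modCont f δ * (∑' k : ℤ, |χ (w * x - k)| * |w * x - k| ^ β)
          + (2 * F * (2 / w) ^ β) * (∑' k : ℤ, |χ (w * x - k)| * |w * x - k| ^ β) := by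
        rw [haC]
        rw [Summable.tsum_add (((hS0.mul_left 2).mul_left (modCont f δ)).add
          (hSβ.mul_left (modCont f δ))) (hSβ.mul_left (2 * F * (2 / w) ^ β))]
        rw [Summable.tsum_add ((hS0.mul_left 2).mul_left (modCont f δ))
          (hSβ.mul_left (modCont f δ))]
        rw [tsum_mul_left, tsum_mul_left, tsum_mul_left, tsum_mul_left]
    _ ≤ modCont f δ * (2 * (moment χ 0).toReal)
          + modCont f δ * (moment χ β).toReal
          + (2 * F * (2 / w) ^ β) * (moment χ β).toReal := by
        have c1 : 2 * ∑' k : ℤ, |χ (w * x - k)| ≤ 2 * (moment χ 0).toReal := by linarith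
        have h1 := mul_le_mul_of_nonneg_left c1 hω0
        have h2' := mul_le_mul_of_nonneg_left hSβle hω0
        have h3 := mul_le_mul_of_nonneg_left hSβle
          (by positivity : (0:ℝ) ≤ 2 * F * (2 / w) ^ β)
        linarith
    _ = modCont f δ * ((moment χ β).toReal + 2 * (moment χ 0).toReal)
          + 2 ^ (β + 1) * F * (moment χ β).toReal * δ := by
        rw [hδdef]
        linear_combination (-(F * (moment χ β).toReal)) * key2



theorem stmt11 (χ : ℝ → ℝ) (h1 : Chi1 χ) (h2 : Chi2 χ)
    (β : ℝ) (hβ0 : 0 < β) (hβ1 : β < 1) (hmom : moment χ β < ⊤)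
    (f : ℝ → ℝ) (hfu : UniformContinuous f) (hfb : ∃ B : ℝ, ∀ x, |f x| ≤ B) :
    ∀ w : ℝ, 2 ≤ w → ∀ x : ℝ,
      |SK χ w f x - f x| ≤
        modCont f (w ^ (-β)) * ((moment χ β).toReal + 2 * (moment χ 0).toReal)
          + 2 ^ (β + 1) * (⨆ y, |f y|) * (moment χ β).toReal * w ^ (-β) := by
  intro w hw x
  exact main h2 hβ0 hβ1 hmom.ne (mom_zero_ne_top hβ0.le hmom.ne h1.2)
    hfu.continuous hfb hw

end Main
end

section
/- Let χ_a, χ_b: ℝ → ℝ be two continuous kernels (each satisfying (χ1), (χ2), (χ3)) with supp χ_a ⊆ [-a,a], supp χ_b ⊆ [-b,b] for positive a, b, and let α ∈ ℝ. Define χ(x) := (1-α)·χ_a(x-a-1) + α·χ_b(x+b). Then χ is a kernel satisfying (χ1), (χ2), and (χ3), and χ(x) = 0 for every x ∈ [0,1). -/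
open MeasureTheory Filter Set Real

lemma supp_bound' {f : ℝ → ℝ} (c : ℝ) (hs : Function.support f ⊆ Set.Icc (-c) c) :
    ∀ y, y ∉ Set.Icc (-c) c → f y = 0 := by
  intro y hy; by_contra h; exact hy (hs h)

lemma supp_M' {f : ℝ → ℝ} (hf : Continuous f) (c : ℝ)
    (hs : Function.support f ⊆ Set.Icc (-c) c) : ∃ M, ∀ x, |f x| ≤ M := by
  have hcs : HasCompactSupport f :=
    HasCompactSupport.intro isCompact_Icc (supp_bound' c hs)
  obtain ⟨C, hC⟩ := hcs.exists_bound_of_continuous hf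
  exact ⟨C, fun x => hC x⟩

theorem stmt14 (χa χb : ℝ → ℝ) (hca : Continuous χa) (hcb : Continuous χb)
    (h1a : Chi1 χa) (h2a : Chi2 χa) (h3a : Chi3 χa)
    (h1b : Chi1 χb) (h2b : Chi2 χb) (h3b : Chi3 χb)
    (a b : ℝ) (ha : 0 < a) (hb : 0 < b)
    (hsa : Function.support χa ⊆ Set.Icc (-a) a)
    (hsb : Function.support χb ⊆ Set.Icc (-b) b) (α : ℝ) :
    Chi1 (fun x => (1 - α) * χa (x - a - 1) + α * χb (x + b)) ∧
    Chi2 (fun x => (1 - α) * χa (x - a - 1) + α * χb (x + b)) ∧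
    Chi3 (fun x => (1 - α) * χa (x - a - 1) + α * χb (x + b)) ∧
    ∀ x ∈ Set.Ico (0 : ℝ) 1, (1 - α) * χa (x - a - 1) + α * χb (x + b) = 0 := by
  set χ : ℝ → ℝ := fun x => (1 - α) * χa (x - a - 1) + α * χb (x + b) with hχ
  have hza := supp_bound' a hsa
  have hzb := supp_bound' b hsb
  obtain ⟨Ma, hMa⟩ := supp_M' hca a hsa
  obtain ⟨Mb, hMb⟩ := supp_M' hcb b hsb
  set M : ℝ := |1 - α| * Ma + |α| * Mb with hM
  have hMbnd : ∀ x, |χ x| ≤ M := by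
    intro x
    calc |χ x| ≤ |(1 - α) * χa (x - a - 1)| + |α * χb (x + b)| := abs_add_le _ _
    _ = |1 - α| * |χa (x - a - 1)| + |α| * |χb (x + b)| := by rw [abs_mul, abs_mul]
    _ ≤ |1 - α| * Ma + |α| * Mb := by
        gcongr <;> [exact hMa _; exact hMb _]
  set R : ℝ := 2 * a + 2 * b + 1 with hR
  have hR0 : 0 < R := by positivity
  have hzχ : ∀ x : ℝ, R < |x| → χ x = 0 := by
    intro x hx
    rcases lt_or_ge x 0 with hneg | hpos
    · have hx' : x < -R := by
        rcases abs_cases x with ⟨h1, _⟩ | ⟨h1, _⟩ <;> linarith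
      have e1 : χa (x - a - 1) = 0 := hza _ (by simp [Set.mem_Icc]; intro; linarith)
      have e2 : χb (x + b) = 0 := hzb _ (by simp [Set.mem_Icc]; intro; linarith)
      simp [hχ, e1, e2]
    · have hx' : R < x := by
        rcases abs_cases x with ⟨h1, _⟩ | ⟨h1, _⟩ <;> linarith
      have e1 : χa (x - a - 1) = 0 := hza _ (by simp [Set.mem_Icc]; intro; linarith)
      have e2 : χb (x + b) = 0 := hzb _ (by simp [Set.mem_Icc]; intro; linarith)
      simp [hχ, e1, e2]
  refine ⟨⟨?_, ?_⟩, ?_, ?_, ?_⟩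
  · -- Integrable
    have ia : Integrable (fun x : ℝ => χa (x - (a + 1))) := h1a.1.comp_sub_right (a + 1)
    have ib : Integrable (fun x : ℝ => χb (x + b)) := h1b.1.comp_add_right b
    have : Integrable (fun x : ℝ => (1 - α) * χa (x - (a + 1)) + α * χb (x + b)) :=
      (ia.const_mul _).add (ib.const_mul _)
    refine this.congr (Filter.Eventually.of_forall fun x => ?_)
    simp only [hχ]
    ring_nf
  · exact ⟨M, fun x _ => hMbnd x⟩
  · -- Chi2
    intro u
    have H := ((h2a (u - a - 1)).mul_left (1 - α)).add ((h2b (u + b)).mul_left α)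
    have heq : (fun k : ℤ => (1 - α) * χa (u - a - 1 - k) + α * χb (u + b - k)) =
        fun k : ℤ => χ (u - k) := by
      funext k; simp only [hχ]; ring_nf
    rw [heq] at H
    simpa using H
  · -- Chi3
    refine ⟨1, one_pos, ?_⟩
    have hM0 : 0 ≤ M := le_trans (abs_nonneg _) (hMbnd 0)
    set N : ℕ := ⌈2 * R + 2⌉₊ with hN
    set C : ENNReal := N * ENNReal.ofReal (M * R) with hC
    have hCtop : C < ⊤ := by
      exact ENNReal.mul_lt_top (ENNReal.natCast_lt_top N) ENNReal.ofReal_lt_top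
    refine lt_of_le_of_lt ?_ hCtop
    refine iSup_le fun u => ?_
    set s : Finset ℤ := Finset.Icc ⌈u - R⌉ ⌊u + R⌋ with hs
    have hout : ∀ k : ℤ, k ∉ s → ENNReal.ofReal (|χ (u - k)| * |u - k| ^ (1 : ℝ)) = 0 := by
      intro k hk
      have : R < |u - k| := by
        simp only [hs, Finset.mem_Icc, not_and_or, not_le] at hk
        rcases hk with hk | hk
        · have : (k : ℝ) < u - R := Int.lt_ceil.mp hk
          rw [abs_of_pos (by linarith)]; linarith
        · have : u + R < k := Int.floor_lt.mp hk
          rw [abs_of_neg (by linarith)]; linarith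
      rw [hzχ _ this]; simp
    rw [tsum_eq_sum hout]
    have hterm : ∀ k ∈ s, ENNReal.ofReal (|χ (u - k)| * |u - k| ^ (1 : ℝ)) ≤
        ENNReal.ofReal (M * R) := by
      intro k hk
      simp only [hs, Finset.mem_Icc] at hk
      have h1 : u - R ≤ (k : ℝ) := le_trans (Int.le_ceil _) (by exact_mod_cast Int.cast_le.mpr hk.1)
      have h2 : (k : ℝ) ≤ u + R := le_trans (by exact_mod_cast Int.cast_le.mpr hk.2) (Int.floor_le _)
      have habs : |u - k| ≤ R := abs_le.mpr ⟨by linarith, by linarith⟩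
      apply ENNReal.ofReal_le_ofReal
      rw [Real.rpow_one]
      exact mul_le_mul (hMbnd _) habs (abs_nonneg _) hM0
    calc (∑ k ∈ s, ENNReal.ofReal (|χ (u - k)| * |u - k| ^ (1 : ℝ)))
        ≤ s.card • ENNReal.ofReal (M * R) := Finset.sum_le_card_nsmul _ _ _ hterm
      _ = (s.card : ENNReal) * ENNReal.ofReal (M * R) := by rw [nsmul_eq_mul]
      _ ≤ C := by
          rw [hC]
          gcongr
          have hcard : s.card ≤ N := by
            rw [hs, Int.card_Icc]
            rw [Int.toNat_le]
            have h1 : (⌊u + R⌋ : ℝ) ≤ u + R := Int.floor_le _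
            have h2 : u - R ≤ (⌈u - R⌉ : ℝ) := Int.le_ceil _
            have h3 : (2 * R + 2 : ℝ) ≤ (N : ℝ) := Nat.le_ceil _
            have : ((⌊u + R⌋ + 1 - ⌈u - R⌉ : ℤ) : ℝ) ≤ (N : ℝ) := by push_cast; linarith
            exact_mod_cast this
          exact_mod_cast hcard
  · -- vanishing on [0,1)
    intro x hx
    obtain ⟨hx0, hx1⟩ := hx
    have e1 : χa (x - a - 1) = 0 := hza _ (by simp [Set.mem_Icc]; intro; linarith)
    have e2 : χb (x + b) = 0 := by
      rcases eq_or_lt_of_le hx0 with h0 | h0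
      · -- x = 0 : χb b = 0 by continuity
        have hzero : ∀ y, b < y → χb y = 0 := fun y hy =>
          hzb _ (by simp [Set.mem_Icc]; intro; linarith)
        have heo : Set.EqOn χb (fun _ => (0:ℝ)) (Set.Ioi b) := fun y hy => hzero y hy
        have hcl : Set.EqOn χb (fun _ => (0:ℝ)) (closure (Set.Ioi b)) :=
          heo.closure hcb continuous_const
        have : χb b = 0 := hcl (by rw [closure_Ioi]; exact Set.self_mem_Ici)
        rw [← h0]; simpa using this
      · exact hzb _ (by simp [Set.mem_Icc]; intro; linarith)
    simp [e1, e2]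
end
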